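/- Fix an integer N ≥ 1, real constants C1 and Csync, and a symmetric matrix J : Fin N → Fin N → ℝ. Define the MaxCut oscillator energy E(φ) = −C1·Σ_{i} Σ_{j ≠ i} J i j · cos(φ i − φ j) − Csync·Σ_i cos(2·φ i). If φ : ℝ → (Fin N → ℝ) is differentiable and satisfies the Kuramoto dynamics with second-harmonic injection (φ i)′(t) = −C1·Σ_{j ≠ i} J i j · sin(φ i (t) − φ j (t)) − Csync·sin(2·φ i (t)) for all t and i, then for every t the derivative of t ↦ E(φ(t)) exists and equals −2·Σ_i ((φ i)′(t))², which is ≤ 0. -/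

import Mathlib

/-- the MaxCut oscillator energy is a Lyapunov function for the
Kuramoto dynamics with second-harmonic injection:
`d/dt E(φ(t)) = −2·Σ_i ((φ i)′(t))² ≤ 0`. -/
theorem stmt_3 (N : ℕ) (hN : 1 ≤ N) (C1 Csync : ℝ)
    (J : Fin N → Fin N → ℝ) (hJ : ∀ i j, J i j = J j i)
    (E : (Fin N → ℝ) → ℝ)
    (hE : ∀ φ : Fin N → ℝ, E φ =
      -C1 * ∑ a, ∑ b ∈ Finset.univ.erase a, J a b * Real.cos (φ a - φ b)
        - Csync * ∑ a, Real.cos (2 * φ a))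
    (φ : ℝ → Fin N → ℝ) (hφ : Differentiable ℝ φ)
    (hdyn : ∀ (t : ℝ) (i : Fin N), deriv (fun s => φ s i) t =
      -C1 * ∑ j ∈ Finset.univ.erase i, J i j * Real.sin (φ t i - φ t j)
        - Csync * Real.sin (2 * φ t i))
    (t : ℝ) :
    HasDerivAt (fun s => E (φ s))
      (-2 * ∑ i, (deriv (fun s => φ s i) t) ^ 2) t ∧
    -2 * ∑ i, (deriv (fun s => φ s i) t) ^ 2 ≤ 0 := by
  set v : Fin N → ℝ := fun i => deriv (fun s => φ s i) t with hv
  have hderiv : ∀ i, HasDerivAt (fun s => φ s i) (v i) t :=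
    fun i => ((differentiable_pi.mp hφ i) t).hasDerivAt
  have h1 : HasDerivAt
      (fun s => -C1 * ∑ a, ∑ b ∈ Finset.univ.erase a, J a b * Real.cos (φ s a - φ s b))
      (-C1 * ∑ a, ∑ b ∈ Finset.univ.erase a,
        J a b * (-Real.sin (φ t a - φ t b) * (v a - v b))) t := by
    apply HasDerivAt.const_mul
    apply HasDerivAt.fun_sum
    intro a _
    apply HasDerivAt.fun_sum
    intro b _
    exact (((hderiv a).sub (hderiv b)).cos).const_mul _
  have h2 : HasDerivAt (fun s => Csync * ∑ a, Real.cos (2 * φ s a))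
      (Csync * ∑ a, (-Real.sin (2 * φ t a) * (2 * v a))) t := by
    apply HasDerivAt.const_mul
    apply HasDerivAt.fun_sum
    intro a _
    exact ((hderiv a).const_mul 2).cos
  have hD : HasDerivAt (fun s => E (φ s))
      (-C1 * ∑ a, ∑ b ∈ Finset.univ.erase a,
        J a b * (-Real.sin (φ t a - φ t b) * (v a - v b))
       - Csync * ∑ a, (-Real.sin (2 * φ t a) * (2 * v a))) t := by
    have := h1.fun_sub h2
    simpa only [hE] using this
  -- algebraic identification of the derivative
  -- extend erase-sums to full sums (diagonal terms vanish)
  have hfull : ∀ a, ∑ b ∈ Finset.univ.erase a,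
      J a b * (-Real.sin (φ t a - φ t b) * (v a - v b))
      = ∑ b, J a b * (-Real.sin (φ t a - φ t b) * (v a - v b)) := by
    intro a
    apply Finset.sum_erase
    simp
  have hsplit : ∀ a b, J a b * (-Real.sin (φ t a - φ t b) * (v a - v b))
      = -(J a b * Real.sin (φ t a - φ t b) * v a)
        - (J b a * Real.sin (φ t b - φ t a) * v b) := by
    intro a b
    rw [hJ b a, Real.sin_sub, Real.sin_sub]
    ring
  set A : ℝ := ∑ a, ∑ b, J a b * Real.sin (φ t a - φ t b) * v a with hA
  have hdouble : ∑ a, ∑ b ∈ Finset.univ.erase a,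
      J a b * (-Real.sin (φ t a - φ t b) * (v a - v b)) = -2 * A := by
    rw [Finset.sum_congr rfl (fun a _ => hfull a)]
    simp only [hsplit, Finset.sum_sub_distrib]
    rw [Finset.sum_comm (f := fun a b => J b a * Real.sin (φ t b - φ t a) * v b)]
    simp only [Finset.sum_neg_distrib, hA]
    ring
  have hAv : ∀ a, ∑ b, J a b * Real.sin (φ t a - φ t b)
      = ∑ b ∈ Finset.univ.erase a, J a b * Real.sin (φ t a - φ t b) := by
    intro a
    symm
    apply Finset.sum_erase
    simp
  have hkey : -C1 * ∑ a, ∑ b ∈ Finset.univ.erase a,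
        J a b * (-Real.sin (φ t a - φ t b) * (v a - v b))
       - Csync * ∑ a, (-Real.sin (2 * φ t a) * (2 * v a))
      = -2 * ∑ i, v i ^ 2 := by
    rw [hdouble, hA]
    have : ∀ a, ∑ b, J a b * Real.sin (φ t a - φ t b) * v a
        = (∑ b ∈ Finset.univ.erase a, J a b * Real.sin (φ t a - φ t b)) * v a := by
      intro a
      rw [← hAv a, Finset.sum_mul]
    simp only [this]
    simp only [Finset.mul_sum, ← Finset.sum_sub_distrib]
    apply Finset.sum_congr rfl
    intro a _
    have hva : v a = -C1 * ∑ j ∈ Finset.univ.erase a, J a j * Real.sin (φ t a - φ t j)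
        - Csync * Real.sin (2 * φ t a) := hdyn t a
    linear_combination (2 * v a) * hva
  rw [hkey] at hD
  refine ⟨hD, ?_⟩
  have : (0:ℝ) ≤ ∑ i, v i ^ 2 := Finset.sum_nonneg (fun i _ => sq_nonneg _)
  nlinarith
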